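/- Let G be a connected graph with a distinguished vertex v₀ whose deletion does not disconnect the graph, and let T be a spanning tree of G rooted at v₀ such that every edge of G not in T joins two comparable vertices (one is an ancestor of the other in T). Then exactly one edge of T is incident to v₀. -/
import Mathlib


/-- In a tree `T` rooted at `v₀`, the vertex `u` is an ancestor of `w` if `u` lies
on every `T`-walk from `v₀` to `w` (in particular on the unique `T`-path). -/
def Ancestor {V : Type*} (T : SimpleGraph V) (v₀ u w : V) : Prop :=
  ∀ p : T.Walk v₀ w, u ∈ p.support

theorem depth_tree_unique_root_edge {V : Type*} [Fintype V]
    (G T : SimpleGraph V) (v₀ : V)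
    (hcard : 2 ≤ Fintype.card V)
    (hG : G.Connected)
    (hdel : ((⊤ : G.Subgraph).deleteVerts {v₀}).coe.Connected)
    (hsub : T ≤ G) (hTconn : T.Connected) (hTacyc : T.IsAcyclic)
    (hdepth : ∀ u w : V, G.Adj u w → ¬ T.Adj u w →
      Ancestor T v₀ u w ∨ Ancestor T v₀ w u) :
    ∃! e : Sym2 V, e ∈ T.edgeSet ∧ v₀ ∈ e := by
  classical
  -- two tree-neighbors of v₀ connected by a T-walk avoiding v₀ must be equal
  have key : ∀ a : V, T.Adj v₀ a → ∀ b : V, T.Adj v₀ b →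
      (∃ p : T.Walk a b, v₀ ∉ p.support) → a = b := by
    rintro a ha b hb ⟨p, hp⟩
    have hpath1 : (SimpleGraph.Walk.cons hb .nil).IsPath := by
      simp [SimpleGraph.Walk.isPath_def, hb.ne]
    have hsupp : v₀ ∉ (p.toPath : T.Walk a b).support := fun h =>
      hp (SimpleGraph.Walk.support_toPath_subset p h)
    have hpath2 : (SimpleGraph.Walk.cons ha (p.toPath : T.Walk a b)).IsPath :=
      (p.toPath.2).cons hsupp
    have huniq := (SimpleGraph.isAcyclic_iff_path_unique.mp hTacyc)
      ⟨_, hpath2⟩ ⟨_, hpath1⟩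
    have hw : (SimpleGraph.Walk.cons ha (p.toPath : T.Walk a b)) =
        SimpleGraph.Walk.cons hb .nil := congrArg Subtype.val huniq
    have := congrArg (fun q => SimpleGraph.Walk.getVert q 1) hw
    simpa using this
  -- an ancestor u ≠ v₀ of w ≠ v₀ is connected to w by a T-walk avoiding v₀
  have anc : ∀ u w : V, u ≠ v₀ → w ≠ v₀ → Ancestor T v₀ u w →
      ∃ p : T.Walk u w, v₀ ∉ p.support := by
    intro u w hu hw hanc
    obtain ⟨q⟩ := hTconn v₀ w
    have hp : (q.toPath : T.Walk v₀ w).IsPath := q.toPath.2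
    generalize hpp : (q.toPath : T.Walk v₀ w) = p at hp
    clear hpp
    cases p with
    | nil => exact absurd rfl hw
    | @cons _ c _ h q' =>
      have hu' : u ∈ q'.support := by
        have := hanc (.cons h q')
        simp only [SimpleGraph.Walk.support_cons, List.mem_cons] at this
        rcases this with h1 | h1
        · exact absurd h1 hu
        · exact h1
      have hv₀ : v₀ ∉ q'.support := ((SimpleGraph.Walk.cons_isPath_iff _ _).mp hp).2
      exact ⟨q'.dropUntil u hu', fun hmem =>
        hv₀ (SimpleGraph.Walk.support_dropUntil_subset _ _ hmem)⟩
  -- each G-edge between vertices ≠ v₀ gives a T-walk avoiding v₀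
  have step : ∀ u w : V, u ≠ v₀ → w ≠ v₀ → G.Adj u w →
      ∃ p : T.Walk u w, v₀ ∉ p.support := by
    intro u w hu hw hadj
    by_cases hT : T.Adj u w
    · exact ⟨.cons hT .nil, by
        simp [SimpleGraph.Walk.support_cons, Ne.symm hu, Ne.symm hw]⟩
    · rcases hdepth u w hadj hT with h | h
      · exact anc u w hu hw h
      · obtain ⟨p, hp⟩ := anc w u hw hu h
        exact ⟨p.reverse, by simpa using hp⟩
  -- propagate along walks in the deleted-vertex graph
  have conn : ∀ (x y : ((⊤ : G.Subgraph).deleteVerts {v₀}).verts)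
      (q : ((⊤ : G.Subgraph).deleteVerts {v₀}).coe.Walk x y),
      ∃ p : T.Walk x.val y.val, v₀ ∉ p.support := by
    intro x y q
    induction q with
    | @nil u =>
      exact ⟨.nil, fun hmem =>
        u.2.2 (Set.mem_singleton_iff.mpr
          (List.mem_singleton.mp (by simpa using hmem)).symm)⟩
    | @cons u v w h q ih =>
      have hG' : G.Adj u.val v.val := ((SimpleGraph.Subgraph.coe_adj _ _ _ ▸ h : (_ : G.Subgraph).Adj _ _)).adj_sub
      have hu : u.val ≠ v₀ := fun hh => u.2.2 (by simp [hh])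
      have hv : v.val ≠ v₀ := fun hh => v.2.2 (by simp [hh])
      obtain ⟨p1, hp1⟩ := step u.val v.val hu hv hG'
      obtain ⟨p2, hp2⟩ := ih
      exact ⟨p1.append p2, by
        simp only [SimpleGraph.Walk.mem_support_append_iff]
        tauto⟩
  -- existence of a tree edge at v₀
  obtain ⟨w, hwne⟩ := Fintype.exists_ne_of_one_lt_card (by omega) v₀
  obtain ⟨q0⟩ := hTconn v₀ w
  have hp0 : (q0.toPath : T.Walk v₀ w).IsPath := q0.toPath.2
  obtain ⟨c, hc⟩ : ∃ c, T.Adj v₀ c := by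
    generalize hpp : (q0.toPath : T.Walk v₀ w) = p at hp0
    clear hpp
    cases p with
    | nil => exact absurd rfl hwne.symm
    | @cons _ c _ h q' => exact ⟨c, h⟩
  refine ⟨s(v₀, c), ⟨T.mem_edgeSet.mpr hc, by simp⟩, ?_⟩
  rintro e ⟨he, hve⟩
  induction e using Sym2.ind with
  | _ x y =>
    have hxy : T.Adj x y := T.mem_edgeSet.mp he
    -- reduce to: any tree-neighbor d of v₀ equals c
    have main : ∀ d : V, T.Adj v₀ d → d = c := by
      intro d hd
      have hdne : d ≠ v₀ := hd.ne'
      have hcne : c ≠ v₀ := hc.ne'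
      have hdm : d ∈ ((⊤ : G.Subgraph).deleteVerts {v₀}).verts := by
        simp [SimpleGraph.Subgraph.deleteVerts_verts, hdne]
      have hcm : c ∈ ((⊤ : G.Subgraph).deleteVerts {v₀}).verts := by
        simp [SimpleGraph.Subgraph.deleteVerts_verts, hcne]
      obtain ⟨q⟩ := hdel ⟨d, hdm⟩ ⟨c, hcm⟩
      exact key d hd c hc (conn _ _ q)
    rcases Sym2.mem_iff.mp hve with h | h
    · subst h
      have := main y (hxy)
      subst this
      rfl
    · subst h
      have := main x (hxy.symm)
      subst this
      exact Sym2.eq_swap
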